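/- A d-dimensional (not necessarily pure) simplicial complex Δ is shellable if and only if it is d-decomposable. -/

import Mathlib

variable {ι : Type*} [DecidableEq ι]

/-- A clutter: an antichain of finite sets (no circuit properly contains another). -/
def IsClutter (C : Set (Finset ι)) : Prop :=
  ∀ e₁ ∈ C, ∀ e₂ ∈ C, e₁ ⊆ e₂ → e₁ = e₂

/-- The independence complex of the clutter with circuit set `C` on ground set `V`:
faces are the subsets of `V` containing no circuit. -/
def indepOn (V : Finset ι) (C : Set (Finset ι)) : Set (Finset ι) :=
  {σ | σ ⊆ V ∧ ∀ e ∈ C, ¬ e ⊆ σ}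

/-- The minimal members of a family of finite sets. -/
def minimalSets (S : Set (Finset ι)) : Set (Finset ι) :=
  {e | e ∈ S ∧ ∀ f ∈ S, f ⊆ e → f = e}

/-- Deletion of a vertex from a clutter: keep the circuits avoiding `v`. -/
def clDel (C : Set (Finset ι)) (v : ι) : Set (Finset ι) :=
  {e | e ∈ C ∧ v ∉ e}

/-- Contraction of a vertex in a clutter: minimal sets among `{e \ {v}}`. -/
def clCon (C : Set (Finset ι)) (v : ι) : Set (Finset ι) :=
  minimalSets ((fun e => e.erase v) '' C)

/-- A simplicial complex: a family of finite sets closed under taking subsets. -/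
def IsComplex (Δ : Set (Finset ι)) : Prop :=
  ∀ σ ∈ Δ, ∀ τ, τ ⊆ σ → τ ∈ Δ

/-- The link of a face `σ`. -/
def link (Δ : Set (Finset ι)) (σ : Finset ι) : Set (Finset ι) :=
  {τ | Disjoint τ σ ∧ τ ∪ σ ∈ Δ}

/-- The face-deletion `Δ \ σ`: faces of `Δ` not containing `σ`. -/
def delFace (Δ : Set (Finset ι)) (σ : Finset ι) : Set (Finset ι) :=
  {τ | τ ∈ Δ ∧ ¬ σ ⊆ τ}

/-- The star of a face `σ`, as a subcomplex. -/
def starC (Δ : Set (Finset ι)) (σ : Finset ι) : Set (Finset ι) :=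
  {τ | τ ∈ Δ ∧ τ ∪ σ ∈ Δ}

/-- A facet: a maximal face. -/
def IsFacet (Δ : Set (Finset ι)) (σ : Finset ι) : Prop :=
  σ ∈ Δ ∧ ∀ τ ∈ Δ, σ ⊆ τ → σ = τ

/-- A shedding face: every face `τ` of the star of `σ` satisfies the exchange property:
for every `v ∈ σ` there is `w ∉ τ` with `(τ ∪ {w}) \ {v}` a face. -/
def SheddingFace (Δ : Set (Finset ι)) (σ : Finset ι) : Prop :=
  ∀ τ ∈ Δ, σ ⊆ τ → ∀ v ∈ σ, ∃ w, w ∉ τ ∧ (insert w τ).erase v ∈ Δ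

/-- Shellability (Björner–Wachs form): an ordering `f 0, f 1, …` of the facets such
that for all `i < j` there are `k < j` and `x ∈ f j` with
`f i ∩ f j ⊆ f k ∩ f j = f j \ {x}`. -/
def Shellable (Δ : Set (Finset ι)) : Prop :=
  ∃ (m : ℕ) (f : Fin m → Finset ι),
    Function.Injective f ∧
    (∀ σ, IsFacet Δ σ ↔ ∃ i, f i = σ) ∧
    ∀ i j : Fin m, i < j →
      ∃ k, k < j ∧ ∃ x ∈ f j, f i ∩ f j ⊆ f k ∩ f j ∧ f k ∩ f j = (f j).erase x

/-- `k`-decomposability (for possibly non-pure complexes): a complex is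
`k`-decomposable if it is a simplex (or degenerate), or has a shedding face of
dimension at most `k` whose deletion and link are both `k`-decomposable. -/
inductive KDecomposable : ℤ → Set (Finset ι) → Prop
  | of_empty (k : ℤ) : KDecomposable k ∅
  | of_simplex (k : ℤ) (σ : Finset ι) : KDecomposable k {τ | τ ⊆ σ}
  | of_shed (k : ℤ) (Δ : Set (Finset ι)) (σ : Finset ι) (hσ : σ ∈ Δ)
      (hne : σ.Nonempty) (hdim : (σ.card : ℤ) ≤ k + 1)
      (hshed : SheddingFace Δ σ)
      (h₁ : KDecomposable k (delFace Δ σ)) (h₂ : KDecomposable k (link Δ σ)) :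
      KDecomposable k Δ

/-- A simplicial vertex of a clutter: any two distinct circuits `e₁, e₂` containing `v`
admit a third circuit `e₃ ⊆ (e₁ ∪ e₂) \ {v}`. -/
def SimplicialVertex (C : Set (Finset ι)) (v : ι) : Prop :=
  ∀ e₁ ∈ C, ∀ e₂ ∈ C, e₁ ≠ e₂ → v ∈ e₁ → v ∈ e₂ →
    ∃ e₃ ∈ C, e₃ ⊆ (e₁ ∪ e₂).erase v

/-- Minors of a clutter (with ground set): obtained by repeated deletions and contractions. -/
inductive Minor : Finset ι → Set (Finset ι) → Finset ι → Set (Finset ι) → Prop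
  | refl (V : Finset ι) (C : Set (Finset ι)) : Minor V C V C
  | del {V C W D} (v : ι) (hv : v ∈ W) (h : Minor V C W D) :
      Minor V C (W.erase v) (clDel D v)
  | con {V C W D} (v : ι) (hv : v ∈ W) (h : Minor V C W D) :
      Minor V C (W.erase v) (clCon D v)

/-- Contractions of a clutter (with ground set): obtained by repeated contractions. -/
inductive ConMinor : Finset ι → Set (Finset ι) → Finset ι → Set (Finset ι) → Prop
  | refl (V : Finset ι) (C : Set (Finset ι)) : ConMinor V C V C
  | con {V C W D} (v : ι) (hv : v ∈ W) (h : ConMinor V C W D) :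
      ConMinor V C (W.erase v) (clCon D v)

/-- A clutter is chordal if every minor with at least one vertex has a simplicial vertex. -/
def Chordal (V : Finset ι) (C : Set (Finset ι)) : Prop :=
  ∀ W D, Minor V C W D → W.Nonempty → ∃ v ∈ W, SimplicialVertex D v

/-- Clutter of minimal non-faces of a complex `Δ` on ground set `V`. -/
def nonfaceClutter (V : Finset ι) (Δ : Set (Finset ι)) : Set (Finset ι) :=
  {e | e ⊆ V ∧ e ∉ Δ ∧ ∀ e', e' ⊂ e → e' ∈ Δ}

/-- `cNon V C d`: the `d`-non-circuits of `C`, i.e. the `d`-subsets of `V`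
that are not circuits of `C`. -/
def cNon (V : Finset ι) (C : Set (Finset ι)) (d : ℕ) : Set (Finset ι) :=
  {e | e ⊆ V ∧ e.card = d ∧ e ∉ C}

/-- Combinatorial Alexander dual of a complex on ground set `V`. -/
def alexDual (V : Finset ι) (Δ : Set (Finset ι)) : Set (Finset ι) :=
  {σ | σ ⊆ V ∧ V \ σ ∉ Δ}

/-- Join of two complexes. -/
def joinC (Δ₁ Δ₂ : Set (Finset ι)) : Set (Finset ι) :=
  {σ | ∃ σ₁ ∈ Δ₁, ∃ σ₂ ∈ Δ₂, σ = σ₁ ∪ σ₂}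

set_option linter.unusedSectionVars false
set_option maxHeartbeats 1000000

section aux
variable [Fintype ι]

lemma exists_facet {Δ : Set (Finset ι)} {γ : Finset ι} (hγ : γ ∈ Δ) :
    ∃ τ, IsFacet Δ τ ∧ γ ⊆ τ := by
  have hfin : {τ ∈ Δ | γ ⊆ τ}.Finite :=
    Set.Finite.subset (Set.finite_univ) (by simp)
  obtain ⟨τ, hτ, hmax⟩ := Set.Finite.exists_maximalFor Finset.card _ hfin ⟨γ, hγ, subset_rfl⟩
  exact ⟨τ, ⟨hτ.1, fun ρ hρ hsub => Finset.eq_of_subset_of_card_le hsub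
    (hmax ⟨hρ, hτ.2.trans hsub⟩ (Finset.card_le_card hsub))⟩, hτ.2⟩

lemma isComplex_delFace {Δ : Set (Finset ι)} (h : IsComplex Δ) (σ : Finset ι) :
    IsComplex (delFace Δ σ) := by
  rintro τ ⟨hτ, hns⟩ ρ hρ
  exact ⟨h τ hτ ρ hρ, fun hs => hns (hs.trans hρ)⟩

lemma isComplex_link {Δ : Set (Finset ι)} (h : IsComplex Δ) (σ : Finset ι) :
    IsComplex (link Δ σ) := by
  rintro τ ⟨hd, hu⟩ ρ hρ
  exact ⟨Finset.disjoint_of_subset_left hρ hd,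
    h _ hu _ (Finset.union_subset_union_left hρ)⟩

lemma facet_delFace_of_facet {Δ : Set (Finset ι)} {σ τ : Finset ι}
    (hτ : IsFacet Δ τ) (hns : ¬ σ ⊆ τ) : IsFacet (delFace Δ σ) τ :=
  ⟨⟨hτ.1, hns⟩, fun ρ hρ hsub => hτ.2 ρ hρ.1 hsub⟩

lemma facet_of_facet_delFace {Δ : Set (Finset ι)} {σ τ : Finset ι}
    (hC : IsComplex Δ) (hshed : SheddingFace Δ σ)
    (hτ : IsFacet (delFace Δ σ) τ) : IsFacet Δ τ := by
  obtain ⟨⟨hτΔ, hns⟩, hmax⟩ := hτ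
  refine ⟨hτΔ, fun ρ hρ hsub => ?_⟩
  by_cases hσρ : σ ⊆ ρ
  · exfalso
    obtain ⟨v, hvσ, hvτ⟩ := Finset.not_subset.mp hns
    have hγ : insert v τ ∈ Δ := hC ρ hρ _ (Finset.insert_subset (hσρ hvσ) hsub)
    by_cases hσγ : σ ⊆ insert v τ
    · obtain ⟨w, hw, hwΔ⟩ := hshed _ hγ hσγ v hvσ
      have hwv : w ≠ v := fun h => hw (h ▸ Finset.mem_insert_self v τ)
      have heq : (insert w (insert v τ)).erase v = insert w τ := by
        rw [Finset.erase_insert_of_ne hwv, Finset.erase_insert hvτ]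
      rw [heq] at hwΔ
      have hnsw : ¬ σ ⊆ insert w τ := fun hs => by
        have := hs hvσ
        simp only [Finset.mem_insert] at this
        rcases this with h | h
        · exact hwv h.symm
        · exact hvτ h
      have hmx := hmax _ ⟨hwΔ, hnsw⟩ (Finset.subset_insert w τ)
      have hwτ : w ∈ τ := by rw [hmx]; exact Finset.mem_insert_self w τ
      exact hw (Finset.mem_insert_of_mem hwτ)
    · have := hmax _ ⟨hγ, hσγ⟩ (Finset.subset_insert v τ)
      exact hvτ (this ▸ Finset.mem_insert_self v τ)
  · exact hmax ρ ⟨hρ, hσρ⟩ hsub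

lemma facet_link_of_facet {Δ : Set (Finset ι)} {σ τ : Finset ι}
    (hτ : IsFacet Δ τ) (hσ : σ ⊆ τ) : IsFacet (link Δ σ) (τ \ σ) := by
  refine ⟨⟨Finset.sdiff_disjoint, by rw [Finset.sdiff_union_of_subset hσ]; exact hτ.1⟩, ?_⟩
  rintro ρ ⟨hd, hu⟩ hsub
  have h1 : τ ⊆ ρ ∪ σ := by
    calc τ = τ \ σ ∪ σ := (Finset.sdiff_union_of_subset hσ).symm
    _ ⊆ ρ ∪ σ := Finset.union_subset_union_left hsub
  have h2 := hτ.2 _ hu h1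
  rw [h2, Finset.union_sdiff_cancel_right hd]

lemma facet_of_facet_link {Δ : Set (Finset ι)} {σ ρ : Finset ι}
    (hρ : IsFacet (link Δ σ) ρ) : IsFacet Δ (ρ ∪ σ) := by
  obtain ⟨⟨hd, hu⟩, hmax⟩ := hρ
  refine ⟨hu, fun γ hγ hsub => ?_⟩
  have hσγ : σ ⊆ γ := Finset.union_subset_iff.mp hsub |>.2
  have hγlink : γ \ σ ∈ link Δ σ :=
    ⟨Finset.sdiff_disjoint, by rw [Finset.sdiff_union_of_subset hσγ]; exact hγ⟩
  have hρsub : ρ ⊆ γ \ σ :=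
    Finset.subset_sdiff.mpr ⟨(Finset.subset_union_left).trans hsub, hd⟩
  have := hmax _ hγlink hρsub
  rw [this, Finset.sdiff_union_of_subset hσγ]

lemma union_inter_union_right (A B σ : Finset ι) :
    (A ∪ σ) ∩ (B ∪ σ) = (A ∩ B) ∪ σ := by
  ext a; simp only [Finset.mem_inter, Finset.mem_union]; tauto

lemma kdecomp_shellable {k : ℤ} {Δ : Set (Finset ι)} (h : KDecomposable k Δ) :
    IsComplex Δ → Shellable Δ := by
  induction h with
  | of_empty =>
    intro _
    refine ⟨0, Fin.elim0, fun a => a.elim0, fun σ => ⟨fun h => absurd h.1 (by simp),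
      fun ⟨i, _⟩ => i.elim0⟩, fun i => i.elim0⟩
  | of_simplex σ =>
    intro _
    refine ⟨1, fun _ => σ, fun a b _ => Subsingleton.elim a b, fun τ => ?_, ?_⟩
    · constructor
      · intro hτ
        exact ⟨0, (hτ.2 σ (by simp only [Set.mem_setOf_eq]; exact subset_rfl) hτ.1).symm⟩
      · rintro ⟨_, rfl⟩
        exact ⟨by simp only [Set.mem_setOf_eq]; exact subset_rfl,
          fun ρ hρ hsub => Finset.Subset.antisymm hsub hρ⟩
    · intro i j hij
      have hi := i.2; have hj := j.2
      simp only [Fin.lt_def] at hij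
      omega
  | of_shed Δ σ hσ hne hdim hshed h₁ h₂ ih₁ ih₂ =>
    intro hC
    obtain ⟨p, g, ginj, gfac, gshell⟩ := ih₁ (isComplex_delFace hC σ)
    obtain ⟨q, h', hinj', hfac', hshell'⟩ := ih₂ (isComplex_link hC σ)
    -- facts about g and h'
    have hgfacet : ∀ i : Fin p, IsFacet (delFace Δ σ) (g i) :=
      fun i => (gfac (g i)).mpr ⟨i, rfl⟩
    have hgΔfacet : ∀ i : Fin p, IsFacet Δ (g i) :=
      fun i => facet_of_facet_delFace hC hshed (hgfacet i)
    have hgns : ∀ i : Fin p, ¬ σ ⊆ g i := fun i => (hgfacet i).1.2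
    have hhfacet : ∀ j : Fin q, IsFacet (link Δ σ) (h' j) :=
      fun j => (hfac' (h' j)).mpr ⟨j, rfl⟩
    have hhd : ∀ j : Fin q, Disjoint (h' j) σ := fun j => (hhfacet j).1.1
    have hhΔfacet : ∀ j : Fin q, IsFacet Δ (h' j ∪ σ) :=
      fun j => facet_of_facet_link (hhfacet j)
    set f : Fin (p + q) → Finset ι := fun i => if h : (i : ℕ) < p then g ⟨i, h⟩
      else h' ⟨(i : ℕ) - p, by have := i.isLt; omega⟩ ∪ σ with hfdef
    have hfpos : ∀ (i : Fin (p + q)) (h : (i : ℕ) < p), f i = g ⟨i, h⟩ :=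
      fun i h => dif_pos h
    have hfneg : ∀ (i : Fin (p + q)) (h : ¬ (i : ℕ) < p),
        f i = h' ⟨(i : ℕ) - p, by have := i.isLt; omega⟩ ∪ σ :=
      fun i h => dif_neg h
    refine ⟨p + q, f, ?_, ?_, ?_⟩
    · -- injective
      intro i₁ i₂ heq
      by_cases h1 : (i₁ : ℕ) < p <;> by_cases h2 : (i₂ : ℕ) < p
      · rw [hfpos i₁ h1, hfpos i₂ h2] at heq
        have h3 := ginj heq
        rw [Fin.mk.injEq] at h3
        exact Fin.ext h3
      · rw [hfpos i₁ h1, hfneg i₂ h2] at heq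
        exact absurd (heq ▸ Finset.subset_union_right) (hgns ⟨i₁, h1⟩)
      · rw [hfneg i₁ h1, hfpos i₂ h2] at heq
        exact absurd (heq.symm ▸ Finset.subset_union_right) (hgns ⟨i₂, h2⟩)
      · rw [hfneg i₁ h1, hfneg i₂ h2] at heq
        have hcancel : ∀ (A B : Finset ι), Disjoint A σ → Disjoint B σ →
            A ∪ σ = B ∪ σ → A = B := by
          intro A B dA dB hAB
          rw [← Finset.union_sdiff_cancel_right dA, ← Finset.union_sdiff_cancel_right dB, hAB]
        have hinner := hinj' (hcancel _ _ (hhd _) (hhd _) heq)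
        rw [Fin.mk.injEq] at hinner
        have := i₁.isLt; have := i₂.isLt
        exact Fin.ext (by omega)
    · -- facets
      intro τ
      constructor
      · intro hτ
        by_cases hστ : σ ⊆ τ
        · obtain ⟨j, hj⟩ := (hfac' (τ \ σ)).mp (facet_link_of_facet hτ hστ)
          refine ⟨⟨p + (j : ℕ), by have := j.isLt; omega⟩, ?_⟩
          rw [hfneg _ (by simp)]
          have hjj : (⟨(⟨p + (j : ℕ), by have := j.isLt; omega⟩ : Fin (p + q)) - p,
              by have := j.isLt; omega⟩ : Fin q) = j := Fin.ext (by simp)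
          rw [hjj, hj, Finset.sdiff_union_of_subset hστ]
        · obtain ⟨i, hi⟩ := (gfac τ).mp (facet_delFace_of_facet hτ hστ)
          refine ⟨⟨(i : ℕ), by have := i.isLt; omega⟩, ?_⟩
          rw [hfpos _ i.isLt]
          rw [← hi]
      · rintro ⟨i, rfl⟩
        by_cases hip : (i : ℕ) < p
        · rw [hfpos i hip]; exact hgΔfacet _
        · rw [hfneg i hip]; exact hhΔfacet _
    · -- shelling condition
      intro i j hij
      simp only [Fin.lt_def] at hij
      by_cases hjp : (j : ℕ) < p
      · -- both in first block
        have hip : (i : ℕ) < p := hij.trans hjp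
        obtain ⟨k, hk, x, hx, hsub, heq⟩ := gshell ⟨i, hip⟩ ⟨j, hjp⟩ hij
        refine ⟨⟨(k : ℕ), by have := k.isLt; omega⟩,
          by simp only [Fin.lt_def]; simpa [Fin.lt_def] using hk, x, ?_⟩
        rw [hfpos i hip, hfpos j hjp, hfpos _ k.isLt]
        exact ⟨hx, hsub, heq⟩
      · by_cases hip : (i : ℕ) < p
        · -- mixed case
          rw [hfpos i hip, hfneg j hjp]
          set j' : Fin q := ⟨(j : ℕ) - p, by have := j.isLt; omega⟩ with hj'
          set fj : Finset ι := h' j' ∪ σ with hfj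
          obtain ⟨v, hvσ, hvg⟩ := Finset.not_subset.mp (hgns ⟨i, hip⟩)
          have hfjΔ : fj ∈ Δ := (hhΔfacet j').1
          have hσfj : σ ⊆ fj := Finset.subset_union_right
          obtain ⟨w, hwfj, hρΔ⟩ := hshed fj hfjΔ hσfj v hvσ
          obtain ⟨F, hFfac, hρF⟩ := exists_facet hρΔ
          have hvfj : v ∈ fj := hσfj hvσ
          have hvF : v ∉ F := by
            intro hvF
            have h1 : insert w fj ⊆ F := by
              rw [← Finset.insert_erase (Finset.mem_insert_of_mem hvfj :
                v ∈ insert w fj)]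
              exact Finset.insert_subset hvF hρF
            have h2 : fj ⊆ F := (Finset.subset_insert w fj).trans h1
            have h3 := (hhΔfacet j').2 F hFfac.1 h2
            have hwF : w ∈ F := h1 (Finset.mem_insert_self w fj)
            rw [← h3] at hwF
            exact hwfj hwF
          have hnsF : ¬ σ ⊆ F := fun hs => hvF (hs hvσ)
          obtain ⟨k₀, hk₀⟩ := (gfac F).mp (facet_delFace_of_facet hFfac hnsF)
          refine ⟨⟨(k₀ : ℕ), by have := k₀.isLt; omega⟩, by simp only [Fin.lt_def]; omega,
            v, hvfj, ?_⟩
          rw [hfpos _ k₀.isLt]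
          have hgk : g ⟨(k₀ : ℕ), k₀.isLt⟩ = F := by
            have heqk : (⟨(k₀ : ℕ), k₀.isLt⟩ : Fin p) = k₀ := Fin.ext rfl
            rw [heqk, hk₀]
          rw [hgk]
          have hkey : F ∩ fj = fj.erase v := by
            apply Finset.Subset.antisymm
            · intro a ha
              rw [Finset.mem_erase]
              exact ⟨fun h => hvF (h ▸ (Finset.mem_inter.mp ha).1),
                (Finset.mem_inter.mp ha).2⟩
            · intro a ha
              rw [Finset.mem_erase] at ha
              refine Finset.mem_inter.mpr ⟨hρF ?_, ha.2⟩
              rw [Finset.mem_erase]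
              exact ⟨ha.1, Finset.mem_insert_of_mem ha.2⟩
          refine ⟨?_, hkey⟩
          rw [hkey]
          intro a ha
          rw [Finset.mem_inter] at ha
          rw [Finset.mem_erase]
          exact ⟨fun h => hvg (h ▸ ha.1), ha.2⟩
        · -- both in second block
          rw [hfneg i hip, hfneg j hjp]
          set i' : Fin q := ⟨(i : ℕ) - p, by have := i.isLt; omega⟩ with hi'
          set j' : Fin q := ⟨(j : ℕ) - p, by have := j.isLt; omega⟩ with hj'
          have hij' : i' < j' := by simp only [Fin.lt_def, hi', hj']; omega
          obtain ⟨k', hk', x, hx, hsub, heq⟩ := hshell' i' j' hij'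
          simp only [Fin.lt_def, hj'] at hk'
          refine ⟨⟨p + (k' : ℕ), by omega⟩, by simp only [Fin.lt_def]; omega,
            x, Finset.mem_union_left σ hx, ?_⟩
          rw [hfneg _ (by simp)]
          have hkk : (⟨(⟨p + (k' : ℕ), by omega⟩ : Fin (p + q)) - p,
              by have := k'.isLt; omega⟩ : Fin q) = k' := Fin.ext (by simp)
          rw [hkk]
          have hxσ : x ∉ σ := Finset.disjoint_left.mp (hhd j') hx
          have herase : (h' j' ∪ σ).erase x = (h' j').erase x ∪ σ := by
            ext a
            simp only [Finset.mem_erase, Finset.mem_union]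
            constructor
            · rintro ⟨hne2, h | h⟩
              · exact Or.inl ⟨hne2, h⟩
              · exact Or.inr h
            · rintro (⟨hne2, h⟩ | h)
              · exact ⟨hne2, Or.inl h⟩
              · exact ⟨fun he => hxσ (he ▸ h), Or.inr h⟩
          rw [union_inter_union_right, union_inter_union_right, herase, heq]
          exact ⟨Finset.union_subset_union_left (heq ▸ hsub), rfl⟩

lemma shellable_kdecomp (d : ℕ) :
    ∀ (m : ℕ) (Δ : Set (Finset ι)) (f : Fin m → Finset ι),
      IsComplex Δ → (∀ σ ∈ Δ, σ.card ≤ d + 1) →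
      Function.Injective f →
      (∀ σ, IsFacet Δ σ ↔ ∃ i, f i = σ) →
      (∀ i j : Fin m, i < j → ∃ k, k < j ∧ ∃ x ∈ f j,
          f i ∩ f j ⊆ f k ∩ f j ∧ f k ∩ f j = (f j).erase x) →
      KDecomposable (d : ℤ) Δ := by
  intro m
  induction m with
  | zero =>
    intro Δ f hC hbd hinj hfac hshell
    have hΔe : Δ = ∅ := by
      ext γ
      simp only [Set.mem_empty_iff_false, iff_false]
      intro hγ
      obtain ⟨τ, hτ, _⟩ := exists_facet hγ
      obtain ⟨i, _⟩ := (hfac τ).mp hτ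
      exact i.elim0
    rw [hΔe]
    exact KDecomposable.of_empty _
  | succ n ih =>
    intro Δ f hC hbd hinj hfac hshell
    classical
    have hfi : ∀ i, IsFacet Δ (f i) := fun i => (hfac (f i)).mpr ⟨i, rfl⟩
    have antichain : ∀ i j : Fin (n + 1), f i ⊆ f j → i = j :=
      fun i j hs => hinj ((hfi i).2 (f j) (hfi j).1 hs)
    rcases Nat.eq_zero_or_pos n with hn | hn
    · -- one facet: Δ is a simplex
      subst hn
      have hΔeq : Δ = {τ | τ ⊆ f 0} := by
        ext γ
        constructor
        · intro hγ
          obtain ⟨τ, hτ, hγτ⟩ := exists_facet hγ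
          obtain ⟨i, rfl⟩ := (hfac τ).mp hτ
          have : i = 0 := Fin.ext (by have := i.isLt; omega)
          exact this ▸ hγτ
        · intro hγ
          exact hC (f 0) (hfi 0).1 γ hγ
      rw [hΔeq]
      exact KDecomposable.of_simplex _ _
    · -- at least two facets
      set last : Fin (n + 1) := ⟨n, Nat.lt_succ_self n⟩ with hlast
      set F : Finset ι := f last with hF
      set σ : Finset ι := F.filter
        (fun x => ∃ k : Fin (n + 1), (k : ℕ) < n ∧ F.erase x ⊆ f k) with hσdef
      have hσmem : ∀ x, x ∈ σ ↔ x ∈ F ∧ ∃ k : Fin (n + 1), (k : ℕ) < n ∧ F.erase x ⊆ f k :=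
        fun x => Finset.mem_filter
      have hσsub : σ ⊆ F := Finset.filter_subset _ _
      have hFfac : IsFacet Δ F := hfi last
      have keyx : ∀ i : Fin (n + 1), (i : ℕ) < n → ∃ x, x ∈ σ ∧ x ∉ f i := by
        intro i hi
        obtain ⟨k, hk, x, hxF, hsub, heq⟩ := hshell i last (by
          simp only [Fin.lt_def, hlast]; exact hi)
        simp only [Fin.lt_def, hlast] at hk
        refine ⟨x, (hσmem x).mpr ⟨hxF, k, hk, by rw [← heq]; exact Finset.inter_subset_left⟩, ?_⟩
        intro hxi
        have : x ∈ f k ∩ F := heq ▸ hsub (Finset.mem_inter.mpr ⟨hxi, hxF⟩)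
        rw [heq] at this
        exact Finset.notMem_erase x F this
      have hnsfi : ∀ i : Fin (n + 1), (i : ℕ) < n → ¬ σ ⊆ f i := by
        intro i hi hsub
        obtain ⟨x, hxσ, hxi⟩ := keyx i hi
        exact hxi (hsub hxσ)
      have hne : σ.Nonempty := by
        obtain ⟨x, hxσ, _⟩ := keyx ⟨0, Nat.succ_pos n⟩ hn
        exact ⟨x, hxσ⟩
      have hσΔ : σ ∈ Δ := hC F hFfac.1 σ hσsub
      have hsubF : ∀ γ ∈ Δ, σ ⊆ γ → γ ⊆ F := by
        intro γ hγ hσγ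
        obtain ⟨τ, hτ, hγτ⟩ := exists_facet hγ
        obtain ⟨i, rfl⟩ := (hfac τ).mp hτ
        by_cases hi : (i : ℕ) < n
        · exact absurd (hσγ.trans hγτ) (hnsfi i hi)
        · have hieq : i = last := Fin.ext (by have := i.isLt; simp only [hlast]; omega)
          rw [hieq] at hγτ
          exact hγτ
      have hdelEq : delFace Δ σ = {γ | ∃ i : Fin (n + 1), (i : ℕ) < n ∧ γ ⊆ f i} := by
        ext γ
        constructor
        · rintro ⟨hγ, hns⟩
          obtain ⟨τ, hτ, hγτ⟩ := exists_facet hγ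
          obtain ⟨i, rfl⟩ := (hfac τ).mp hτ
          by_cases hi : (i : ℕ) < n
          · exact ⟨i, hi, hγτ⟩
          · have hieq : i = last := Fin.ext (by have := i.isLt; simp only [hlast]; omega)
            rw [hieq] at hγτ
            obtain ⟨x, hxσ, hxγ⟩ := Finset.not_subset.mp hns
            obtain ⟨hxF, k, hk, herase⟩ := (hσmem x).mp hxσ
            exact ⟨k, hk, (Finset.subset_erase.mpr ⟨hγτ, hxγ⟩).trans herase⟩
        · rintro ⟨i, hi, hsub⟩
          exact ⟨hC (f i) (hfi i).1 γ hsub, fun hs => hnsfi i hi (hs.trans hsub)⟩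
      have hlinkEq : link Δ σ = {τ | τ ⊆ F \ σ} := by
        ext τ
        constructor
        · rintro ⟨hd, hu⟩
          have hsub : τ ∪ σ ⊆ F := hsubF _ hu Finset.subset_union_right
          exact Finset.subset_sdiff.mpr ⟨Finset.subset_union_left.trans hsub, hd⟩
        · intro hsub
          have h1 := Finset.subset_sdiff.mp hsub
          exact ⟨h1.2, hC F hFfac.1 _ (Finset.union_subset (h1.1)
            hσsub)⟩
      have hshed : SheddingFace Δ σ := by
        intro τ hτ hστ v hvσ
        have hτF : τ ⊆ F := hsubF τ hτ hστ
        by_cases hτeq : τ = F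
        · subst hτeq
          obtain ⟨hvF, k, hk, herase⟩ := (hσmem v).mp hvσ
          have hvfk : v ∉ f k := by
            intro hvfk
            have hsub2 : F ⊆ f k := by
              rw [← Finset.insert_erase hvF]
              exact Finset.insert_subset hvfk herase
            have := antichain last k hsub2
            simp only [Fin.ext_iff, hlast] at this
            omega
          have hssub : F.erase v ⊂ f k := by
            refine Finset.ssubset_iff_subset_ne.mpr ⟨herase, ?_⟩
            intro hcontra
            have hsub2 : f k ⊆ F := hcontra ▸ Finset.erase_subset v F
            have := antichain k last hsub2
            simp only [Fin.ext_iff, hlast] at this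
            omega
          obtain ⟨w, hwk, hwe⟩ := Finset.exists_of_ssubset hssub
          have hwv : w ≠ v := fun h => hvfk (h ▸ hwk)
          have hwF : w ∉ F := fun h => hwe (Finset.mem_erase.mpr ⟨hwv, h⟩)
          refine ⟨w, hwF, ?_⟩
          rw [Finset.erase_insert_of_ne hwv]
          exact hC (f k) (hfi k).1 _ (Finset.insert_subset hwk herase)
        · obtain ⟨w, hwF, hwτ⟩ := Finset.exists_of_ssubset
            (Finset.ssubset_iff_subset_ne.mpr ⟨hτF, hτeq⟩)
          refine ⟨w, hwτ, ?_⟩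
          exact hC F hFfac.1 _ ((Finset.erase_subset v _).trans
            (Finset.insert_subset hwF hτF))
      -- deletion is shellable with n facets
      have hdel : KDecomposable (d : ℤ) (delFace Δ σ) := by
        have hC' : IsComplex (delFace Δ σ) := isComplex_delFace hC σ
        have hbd' : ∀ γ ∈ delFace Δ σ, γ.card ≤ d + 1 := fun γ hγ => hbd γ hγ.1
        set f' : Fin n → Finset ι := fun i => f (Fin.castSucc i) with hf'def
        have hinj' : Function.Injective f' :=
          fun a b h => Fin.castSucc_injective n (hinj h)
        have hmemfi : ∀ i : Fin n, f' i ∈ delFace Δ σ := by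
          intro i
          rw [hdelEq]
          exact ⟨Fin.castSucc i, by simpa using i.isLt, subset_rfl⟩
        have hfac' : ∀ τ, IsFacet (delFace Δ σ) τ ↔ ∃ i : Fin n, f' i = τ := by
          intro τ
          constructor
          · intro hτ
            have hτmem := hτ.1
            rw [hdelEq] at hτmem
            obtain ⟨j, hj, hsub⟩ := hτmem
            set j' : Fin n := ⟨(j : ℕ), hj⟩ with hj'
            have hjj : Fin.castSucc j' = j := Fin.ext (by simp [hj'])
            have : τ = f' j' := by
              refine hτ.2 (f' j') (hmemfi j') ?_
              show τ ⊆ f (Fin.castSucc j')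
              rw [hjj]
              exact hsub
            exact ⟨j', this.symm⟩
          · rintro ⟨i, rfl⟩
            refine ⟨hmemfi i, ?_⟩
            intro ρ hρ hsub
            have hρmem := hρ
            rw [hdelEq] at hρmem
            obtain ⟨j, hj, hρsub⟩ := hρmem
            have hcs : Fin.castSucc i = j := antichain _ _ (hsub.trans hρsub)
            rw [← hcs] at hρsub
            exact Finset.Subset.antisymm hsub hρsub
        have hshell' : ∀ i j : Fin n, i < j → ∃ k, k < j ∧ ∃ x ∈ f' j,
            f' i ∩ f' j ⊆ f' k ∩ f' j ∧ f' k ∩ f' j = (f' j).erase x := by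
          intro i j hij
          obtain ⟨k, hk, x, hx, hsub, heq⟩ := hshell (Fin.castSucc i) (Fin.castSucc j)
            (Fin.castSucc_lt_castSucc_iff.mpr hij)
          simp only [Fin.lt_def, Fin.coe_castSucc] at hk
          have hkn : (k : ℕ) < n := hk.trans j.isLt
          set k' : Fin n := ⟨(k : ℕ), hkn⟩ with hk'
          have hkk : Fin.castSucc k' = k := Fin.ext (by simp [hk'])
          refine ⟨k', by simp only [Fin.lt_def]; exact hk, x, ?_⟩
          show x ∈ f (Fin.castSucc j) ∧
            f (Fin.castSucc i) ∩ f (Fin.castSucc j) ⊆ f (Fin.castSucc k') ∩ f (Fin.castSucc j) ∧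
            f (Fin.castSucc k') ∩ f (Fin.castSucc j) = (f (Fin.castSucc j)).erase x
          rw [hkk]
          exact ⟨hx, hsub, heq⟩
        exact ih (delFace Δ σ) f' hC' hbd' hinj' hfac' hshell'
      have hlink : KDecomposable (d : ℤ) (link Δ σ) := by
        rw [hlinkEq]
        exact KDecomposable.of_simplex _ _
      have hdimσ : (σ.card : ℤ) ≤ (d : ℤ) + 1 := by
        have h1 : σ.card ≤ F.card := Finset.card_le_card hσsub
        have h2 : F.card ≤ d + 1 := hbd F hFfac.1
        exact_mod_cast h1.trans h2
      exact KDecomposable.of_shed _ Δ σ hσΔ hne hdimσ hshed hdel hlink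

end aux

/-- a `d`-dimensional complex is shellable iff it is `d`-decomposable. -/
theorem stmt6 [Fintype ι] (Δ : Set (Finset ι)) (hΔ : IsComplex Δ) (d : ℕ)
    (hdim : ∀ σ ∈ Δ, σ.card ≤ d + 1) (hd : ∃ σ ∈ Δ, σ.card = d + 1) :
    Shellable Δ ↔ KDecomposable (d : ℤ) Δ := by
  constructor
  · rintro ⟨m, f, hinj, hfac, hsh⟩
    exact shellable_kdecomp d m Δ f hΔ hdim hinj hfac hsh
  · intro h
    exact kdecomp_shellable h hΔ
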